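/- Let p be a prime and K a finite separable field extension of the rational function field F_p(x). Let D be a derivation on K such that D(x) = 1, where x denotes the image in K of the variable of F_p(x) (D is then the unique extension to K of the derivation d/dx). Let v be a normalized additive discrete valuation on K admitting a uniformizer t ∈ K with v(D(t)) = 0 (this holds at every finite unramified place of K), and let y ∈ K with v(y) ≥ 0 (i.e., the place is not a pole of y). Then every solution f ∈ K of the p-Riccati equation D^{p-1}(f) + f^p = y satisfies v(f) ≥ −1, i.e., f has at most a simple pole at this place. -/

import Mathlib

set_option synthInstance.maxHeartbeats 1000000 in
set_option maxHeartbeats 1000000 in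
lemma pRiccati_aux_span (p : ℕ) [Fact p.Prime] (K : Type*) [Field K] [CharP K p]
    [Algebra (RatFunc (ZMod p)) K] [Algebra.IsSeparable (RatFunc (ZMod p)) K] :
    ∀ a : K, a ∈ Submodule.span ((frobenius K p).fieldRange : Subfield K)
      (Set.range fun i : Fin p => (algebraMap (RatFunc (ZMod p)) K RatFunc.X) ^ (i : ℕ)) := by
  have hp : p.Prime := Fact.out
  have hp0 : 0 < p := hp.pos
  set xx : K := algebraMap (RatFunc (ZMod p)) K RatFunc.X with hxx
  set Kp : Subfield K := (frobenius K p).fieldRange with hKp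
  set S : Submodule Kp K := Submodule.span Kp (Set.range fun i : Fin p => xx ^ (i : ℕ)) with hS
  show ∀ a : K, a ∈ S
  have hmem_p : ∀ b : K, b ^ p ∈ Kp := fun b => ⟨b, frobenius_def p b⟩
  have hone : (1 : K) ∈ S := by
    have h0 : xx ^ ((0 : Fin p) : ℕ) ∈ S := Submodule.subset_span ⟨0, rfl⟩
    simpa using h0
  have hxn : ∀ n : ℕ, xx ^ n ∈ S := by
    intro n; induction n using Nat.strong_induction_on with
    | _ n ih =>
      rcases lt_or_ge n p with h | h
      · exact Submodule.subset_span ⟨⟨n, h⟩, rfl⟩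
      · have he : xx ^ n = (⟨xx ^ p, hmem_p xx⟩ : Kp) • xx ^ (n - p) := by
          rw [Subfield.smul_def]
          show xx ^ n = xx ^ p * xx ^ (n - p)
          rw [← pow_add]; congr 1; omega
        rw [he]; exact S.smul_mem _ (ih (n - p) (by omega))
  have hmulx : ∀ (i : ℕ), ∀ b ∈ S, xx ^ i * b ∈ S := by
    intro i b hb
    induction hb using Submodule.span_induction with
    | mem c hc =>
      obtain ⟨j, rfl⟩ := hc
      rw [← pow_add]; exact hxn _
    | zero => simpa using S.zero_mem
    | add u w hu hw ihu ihw => rw [mul_add]; exact S.add_mem ihu ihw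
    | smul c u hu ihu =>
      have he : xx ^ i * (c • u) = c • (xx ^ i * u) := mul_smul_comm c (xx ^ i) u
      rw [he]; exact S.smul_mem _ ihu
  have hmul : ∀ a ∈ S, ∀ b ∈ S, a * b ∈ S := by
    intro a ha b hb
    induction ha using Submodule.span_induction with
    | mem c hc =>
      obtain ⟨j, rfl⟩ := hc
      exact hmulx _ b hb
    | zero => simpa using S.zero_mem
    | add u w hu hw ihu ihw => rw [add_mul]; exact S.add_mem ihu ihw
    | smul c u hu ihu =>
      have he : (c • u) * b = c • (u * b) := smul_mul_assoc c u b
      rw [he]; exact S.smul_mem _ ihu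
  have hpowS : ∀ a ∈ S, ∀ n : ℕ, a ^ n ∈ S := by
    intro a ha n
    induction n with
    | zero => simpa using hone
    | succ k ihk => rw [pow_succ]; exact hmul _ ihk _ ha
  have hfr : ∀ b : K, b ^ p ∈ S := by
    intro b
    have : (⟨b ^ p, hmem_p b⟩ : Kp) • (1 : K) ∈ S := S.smul_mem _ hone
    simpa [Subfield.smul_def] using this
  have hinv : ∀ a ∈ S, a⁻¹ ∈ S := by
    intro a ha
    by_cases h0 : a = 0
    · simpa [h0] using S.zero_mem
    · have he : a⁻¹ = (⟨(a⁻¹) ^ p, hmem_p _⟩ : Kp) • a ^ (p - 1) := by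
        rw [Subfield.smul_def]
        show a⁻¹ = (a⁻¹) ^ p * a ^ (p - 1)
        have key : a ^ p = a ^ (p - 1) * a := by
          rw [← pow_succ]
          congr 1
          omega
        rw [inv_pow, key, mul_inv]
        field_simp
      rw [he]; exact S.smul_mem _ (hpowS a ha (p - 1))
  set S' : Subfield K :=
    { carrier := S
      mul_mem' := fun ha hb => hmul _ ha _ hb
      one_mem' := hone
      add_mem' := fun ha hb => S.add_mem ha hb
      zero_mem' := S.zero_mem
      neg_mem' := fun ha => S.neg_mem ha
      inv_mem' := fun x hx => hinv x hx } with hS'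
  have hmemS' : ∀ z : K, z ∈ S' ↔ z ∈ S := fun z => Iff.rfl
  have halg : ∀ r : RatFunc (ZMod p), algebraMap (RatFunc (ZMod p)) K r ∈ S' := by
    set φ : Polynomial (ZMod p) →+* K := (algebraMap (RatFunc (ZMod p)) K).comp
      (algebraMap (Polynomial (ZMod p)) (RatFunc (ZMod p))) with hφ
    have hφX : φ Polynomial.X = xx := by
      rw [hφ, RingHom.comp_apply, RatFunc.algebraMap_X]
    have hpoly : ∀ P : Polynomial (ZMod p), φ P ∈ S' := by
      intro P
      induction P using Polynomial.induction_on with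
      | C c =>
        have h1 : ((c.val : ℕ) : ZMod p) = c := ZMod.natCast_rightInverse c
        have h2 : (Polynomial.C c : Polynomial (ZMod p)) = ((c.val : ℕ) : Polynomial (ZMod p)) :=
          (congrArg Polynomial.C h1).symm.trans (map_natCast Polynomial.C c.val)
        rw [h2, map_natCast φ]
        exact natCast_mem S' c.val
      | add P Q hP hQ => rw [map_add]; exact S'.add_mem hP hQ
      | monomial n c ih =>
        rw [map_mul, map_pow, hφX]
        refine S'.mul_mem ?_ ?_
        · have h1 : ((c.val : ℕ) : ZMod p) = c := ZMod.natCast_rightInverse c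
          have h2 : (Polynomial.C c : Polynomial (ZMod p)) = ((c.val : ℕ) : Polynomial (ZMod p)) :=
            (congrArg Polynomial.C h1).symm.trans (map_natCast Polynomial.C c.val)
          rw [h2, map_natCast φ]
          exact natCast_mem S' c.val
        · exact (hmemS' _).2 (hxn (n + 1))
    intro r
    induction r using RatFunc.induction_on with
    | f P Q hQ =>
      rw [map_div₀]
      exact S'.div_mem (hpoly P) (hpoly Q)
  set W : IntermediateField (RatFunc (ZMod p)) K := S'.toIntermediateField halg with hW
  haveI : Algebra.IsSeparable W K :=
    Algebra.isSeparable_tower_top_of_isSeparable (RatFunc (ZMod p)) W K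
  haveI : IsPurelyInseparable W K := by
    refine (isPurelyInseparable_iff_pow_mem W p).2 fun b => ⟨1, ⟨⟨b ^ p, ?_⟩, by simp⟩⟩
    show b ^ p ∈ S
    exact hfr b
  intro a
  obtain ⟨w, rfl⟩ := IsPurelyInseparable.surjective_algebraMap_of_isSeparable W K a
  exact w.2

set_option maxHeartbeats 1000000 in
/-- Let `p` be a prime and `K` a finite separable field extension of `𝔽_p(x)`, with `D`
the derivation on `K` extending `d/dx` (an additive map satisfying the Leibniz rule, with
`D(x) = 1`). Let `v` be a normalized additive discrete valuation on `K` (values in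
`ℤ ∪ {∞}`, with `v a = ∞ ↔ a = 0`, multiplicativity, the ultrametric inequality, and
surjectivity onto `ℤ`) admitting a uniformizer `t` with `v(D(t)) = 0` (as at every finite
unramified place of `K`), and let `y ∈ K` with `v(y) ≥ 0`. Then every solution `f ∈ K` of
the `p`-Riccati equation `D^{p-1}(f) + f^p = y` satisfies `v(f) ≥ -1`, i.e. `f` has at
most a simple pole at this place. -/
theorem pRiccati_at_most_simple_pole
    (p : ℕ) [Fact p.Prime] (K : Type*) [Field K]
    [Algebra (RatFunc (ZMod p)) K]
    [FiniteDimensional (RatFunc (ZMod p)) K]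
    [Algebra.IsSeparable (RatFunc (ZMod p)) K]
    (D : K → K)
    (hadd : ∀ u v : K, D (u + v) = D u + D v)
    (hleib : ∀ u v : K, D (u * v) = u * D v + v * D u)
    (hx : D (algebraMap (RatFunc (ZMod p)) K RatFunc.X) = 1)
    (v : K → WithTop ℤ)
    (hv_top : ∀ a : K, v a = ⊤ ↔ a = 0)
    (hv_mul : ∀ a b : K, v (a * b) = v a + v b)
    (hv_add : ∀ a b : K, min (v a) (v b) ≤ v (a + b))
    (hv_surj : ∀ n : ℤ, ∃ a : K, v a = (n : WithTop ℤ))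
    (t : K) (ht : v t = 1) (htD : v (D t) = 0)
    (y : K) (hy : 0 ≤ v y)
    (f : K) (hric : D^[p - 1] f + f ^ p = y) :
    (-1 : WithTop ℤ) ≤ v f := by
  classical
  have hp : p.Prime := Fact.out
  have hp2 : 2 ≤ p := hp.two_le
  haveI charK : CharP K p := charP_of_injective_ringHom (((algebraMap (RatFunc (ZMod p)) K).comp
    (algebraMap (ZMod p) (RatFunc (ZMod p)))).injective) p
  -- derivation basics
  have hD0 : D 0 = 0 := by
    have h := hadd 0 0
    rw [add_zero] at h
    have h2 : D 0 + 0 = D 0 + D 0 := by rw [add_zero]; exact h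
    exact (add_left_cancel h2).symm
  have hD1 : D 1 = 0 := by
    have h := hleib 1 1
    rw [mul_one, one_mul] at h
    have h2 : D 1 + 0 = D 1 + D 1 := by rw [add_zero]; exact h
    exact (add_left_cancel h2).symm
  have hDpow : ∀ (a : K) (n : ℕ), D (a ^ (n + 1)) = ((n + 1 : ℕ) : K) * a ^ n * D a := by
    intro a n
    induction n with
    | zero => simp [pow_one]
    | succ k ih =>
      have h : a ^ (k + 1 + 1) = a * a ^ (k + 1) := by ring
      rw [h, hleib, ih]
      push_cast
      ring
  have hDp : ∀ a : K, D (a ^ p) = 0 := by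
    intro a
    obtain ⟨k, hk⟩ : ∃ k, p = k + 1 := ⟨p - 1, by omega⟩
    rw [hk, hDpow]
    have hc : ((k + 1 : ℕ) : K) = ((p : ℕ) : K) := by rw [hk]
    rw [hc, CharP.cast_eq_zero K p]
    ring
  -- valuation basics
  have hvtop' : ∀ a : K, a ≠ 0 → ∃ m : ℤ, v a = (m : WithTop ℤ) := by
    intro a ha
    obtain ⟨m, hm⟩ := WithTop.ne_top_iff_exists.1 (fun h => ha ((hv_top a).1 h))
    exact ⟨m, hm.symm⟩
  have hv0 : v 0 = ⊤ := (hv_top 0).2 rfl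
  have hv1 : v 1 = 0 := by
    obtain ⟨m, hm⟩ := hvtop' 1 one_ne_zero
    have h := hv_mul 1 1
    rw [mul_one, hm] at h
    have h2 : m = m + m := by exact_mod_cast h
    have h3 : m = 0 := by omega
    rw [hm, h3]; norm_cast
  have hvneg : ∀ a : K, v (-a) = v a := by
    have hm1 : v (-1 : K) = 0 := by
      obtain ⟨m, hm⟩ := hvtop' (-1 : K) (by norm_num)
      have h : v ((-1 : K) * (-1)) = v (-1) + v (-1) := hv_mul _ _
      rw [neg_mul_neg, one_mul, hv1, hm] at h
      have h2 : (0 : ℤ) = m + m := by exact_mod_cast h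
      have hm0 : m = 0 := by omega
      rw [hm, hm0]; norm_cast
    intro a
    calc v (-a) = v ((-1) * a) := by rw [neg_one_mul]
    _ = v (-1 : K) + v a := hv_mul _ _
    _ = 0 + v a := by rw [hm1]
    _ = v a := zero_add _
  have hvmin_lt : ∀ a b : K, v a < v b → v (a + b) = v a := by
    intro a b hab
    refine le_antisymm ?_ ?_
    · by_contra hcon
      push_neg at hcon
      have h2 : min (v (a + b)) (v (-b)) ≤ v ((a + b) + (-b)) := hv_add _ _
      have h3 : (a + b) + (-b) = a := by ring
      rw [h3, hvneg] at h2
      have h4 : v a < min (v (a + b)) (v b) := lt_min hcon hab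
      exact absurd h2 (not_le.2 h4)
    · exact le_trans (le_of_eq (min_eq_left hab.le).symm) (hv_add a b)
  have hvpow : ∀ (a : K) (n : ℕ), v (a ^ n) = n • v a := by
    intro a n
    induction n with
    | zero => simpa [pow_zero] using hv1
    | succ k ih => rw [pow_succ, hv_mul, ih, succ_nsmul]
  have hsmulcoe : ∀ (n : ℕ) (m : ℤ), n • ((m : ℤ) : WithTop ℤ) = (((n : ℤ) * m : ℤ) : WithTop ℤ) := by
    intro n m
    induction n with
    | zero => simp
    | succ k ih =>
      rw [succ_nsmul, ih, ← WithTop.coe_add]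
      congr 1
      push_cast
      ring
  have hvnat : ∀ n : ℕ, 0 < n → n < p → v ((n : K)) = 0 := by
    intro n hn1 hn2
    have hzn : ((n : ZMod p)) ≠ 0 := by
      rw [Ne, ZMod.natCast_eq_zero_iff]
      exact fun h => absurd (Nat.le_of_dvd hn1 h) (not_le.2 hn2)
    have hne : (n : K) ≠ 0 := by
      rw [Ne, CharP.cast_eq_zero_iff K p n]
      exact fun h => absurd (Nat.le_of_dvd hn1 h) (not_le.2 hn2)
    have hfield : ((n : K)) = ZMod.castHom (dvd_refl p) K ((n : ZMod p)) := by
      rw [map_natCast]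
    have hpow1 : ((n : K)) ^ (p - 1) = 1 := by
      rw [hfield, ← map_pow, ZMod.pow_card_sub_one_eq_one hzn, map_one]
    obtain ⟨m, hm⟩ := hvtop' _ hne
    have h := hvpow ((n : K)) (p - 1)
    rw [hpow1, hv1, hm, hsmulcoe] at h
    have h2 : (0 : ℤ) = ((p - 1 : ℕ) : ℤ) * m := by exact_mod_cast h
    have hp1 : ((p - 1 : ℕ) : ℤ) ≠ 0 := by
      have : 1 ≤ p - 1 := by omega
      exact_mod_cast Nat.one_le_iff_ne_zero.1 this
    have hm0 : m = 0 := by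
      rcases mul_eq_zero.1 h2.symm with h' | h'
      · exact absurd h' hp1
      · exact h'
    rw [hm, hm0]; norm_cast
  -- finite sums
  have hDsum : ∀ (s : Finset (Fin p)) (g : Fin p → K),
      D (∑ i ∈ s, g i) = ∑ i ∈ s, D (g i) := by
    intro s g
    induction s using Finset.induction_on with
    | empty => simpa using hD0
    | @insert a s hni ih =>
      rw [Finset.sum_insert hni, hadd, ih, Finset.sum_insert hni]
  have hvsum_ge : ∀ (s : Finset (Fin p)) (g : Fin p → K) (c : WithTop ℤ),
      (∀ i ∈ s, c ≤ v (g i)) → c ≤ v (∑ i ∈ s, g i) := by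
    intro s
    induction s using Finset.induction_on with
    | empty => intro g c _; rw [Finset.sum_empty, hv0]; exact le_top
    | @insert a s ha ih =>
      intro g c hc
      rw [Finset.sum_insert ha]
      exact le_trans (le_min (hc a (Finset.mem_insert_self a s))
        (ih g c fun i hi => hc i (Finset.mem_insert_of_mem hi))) (hv_add _ _)
  have hvsum_eq : ∀ (s : Finset (Fin p)) (g : Fin p → K),
      (∀ i ∈ s, ∀ j ∈ s, i ≠ j → g i ≠ 0 → g j ≠ 0 → v (g i) ≠ v (g j)) →
      v (∑ i ∈ s, g i) = s.inf fun i => v (g i) := by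
    intro s
    induction s using Finset.induction_on with
    | empty => intro g _; rw [Finset.sum_empty, Finset.inf_empty, hv0]
    | @insert a s ha ih =>
      intro g hg
      rw [Finset.sum_insert ha, Finset.inf_insert]
      have hrest := ih g (fun i hi j hj => hg i (Finset.mem_insert_of_mem hi) j
        (Finset.mem_insert_of_mem hj))
      rcases lt_trichotomy (v (g a)) (s.inf fun i => v (g i)) with hlt | heq | hgt
      · rw [min_eq_left hlt.le]
        exact hvmin_lt _ _ (by rw [hrest]; exact hlt)
      · by_cases htop : v (g a) = ⊤
        · have hga : g a = 0 := (hv_top _).1 htop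
          have hsum0 : v (∑ i ∈ s, g i) = ⊤ := by rw [hrest, ← heq, htop]
          have hz : (∑ i ∈ s, g i) = 0 := (hv_top _).1 hsum0
          rw [hga, hz, zero_add, hv0, ← heq, htop, min_self]
        · have hsne : s.Nonempty := by
            rcases s.eq_empty_or_nonempty with rfl | h
            · rw [Finset.inf_empty] at heq; exact absurd heq htop
            · exact h
          obtain ⟨j, hjs, hj⟩ := Finset.exists_mem_eq_inf s hsne (fun i => v (g i))
          have hgj : g j ≠ 0 := by
            intro h0
            rw [h0, hv0] at hj
            exact htop (heq.trans hj)
          have hganz : g a ≠ 0 := fun h0 => htop (by rw [h0, hv0])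
          have hane : a ≠ j := fun he => ha (he ▸ hjs)
          exact absurd (heq.trans hj) (hg a (Finset.mem_insert_self a s) j
            (Finset.mem_insert_of_mem hjs) hane hganz hgj)
      · rw [min_eq_right hgt.le, add_comm, hvmin_lt _ _ (by rw [hrest]; exact hgt), hrest]
  -- representation over t
  set Kp : Subfield K := (frobenius K p).fieldRange with hKp
  set xx : K := algebraMap (RatFunc (ZMod p)) K RatFunc.X with hxx
  have hspan : Submodule.span Kp (Set.range fun i : Fin p => xx ^ (i : ℕ)) = ⊤ :=
    Submodule.eq_top_iff'.2 (pRiccati_aux_span p K)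
  haveI hfinKp : Module.Finite Kp K := ⟨⟨Finset.univ.image fun i : Fin p => xx ^ (i : ℕ), by
    rw [Finset.coe_image, Finset.coe_univ, Set.image_univ]; exact hspan⟩⟩
  have htne : t ≠ 0 := by
    intro h
    rw [h, hv0] at ht
    exact absurd ht.symm (by simp)
  have hvt : ∀ n : ℕ, v (t ^ n) = ((n : ℤ) : WithTop ℤ) := by
    intro n
    rw [hvpow, ht]
    have h1 : (1 : WithTop ℤ) = ((1 : ℤ) : WithTop ℤ) := rfl
    rw [h1, hsmulcoe]
    norm_num
  have hsmuldef : ∀ (c : Kp) (a : K), c • a = (c : K) * a := fun c a => rfl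
  have hvterm : ∀ (c : K) (i : Fin p), c ≠ 0 →
      ∃ m : ℤ, v c = (m : WithTop ℤ) ∧
        v (c ^ p * t ^ (i : ℕ)) = (((p : ℤ) * m + ((i : ℕ) : ℤ) : ℤ) : WithTop ℤ) := by
    intro c i hc
    obtain ⟨m, hm⟩ := hvtop' c hc
    refine ⟨m, hm, ?_⟩
    rw [hv_mul, hvpow, hm, hsmulcoe, hvt, ← WithTop.coe_add]
  have hgdist : ∀ (b : Fin p → K), ∀ i ∈ Finset.univ, ∀ j ∈ (Finset.univ : Finset (Fin p)),
      i ≠ j → (b i ^ p * t ^ (i : ℕ)) ≠ 0 → (b j ^ p * t ^ (j : ℕ)) ≠ 0 →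
      v (b i ^ p * t ^ (i : ℕ)) ≠ v (b j ^ p * t ^ (j : ℕ)) := by
    intro b i _ j _ hij hi hj
    have hbi : b i ≠ 0 := fun h => hi (by rw [h]; simp [zero_pow hp.ne_zero])
    have hbj : b j ≠ 0 := fun h => hj (by rw [h]; simp [zero_pow hp.ne_zero])
    obtain ⟨mi, _, hvi⟩ := hvterm (b i) i hbi
    obtain ⟨mj, _, hvj⟩ := hvterm (b j) j hbj
    rw [hvi, hvj]
    intro he
    have he' : (p : ℤ) * mi + ((i : ℕ) : ℤ) = (p : ℤ) * mj + ((j : ℕ) : ℤ) := by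
      exact_mod_cast he
    have hd : ((j : ℕ) : ℤ) - ((i : ℕ) : ℤ) = (p : ℤ) * (mi - mj) := by linear_combination -he'
    have hdvd : (p : ℤ) ∣ ((j : ℕ) : ℤ) - ((i : ℕ) : ℤ) := ⟨mi - mj, hd⟩
    have hip : ((i : ℕ) : ℤ) < (p : ℤ) := by exact_mod_cast i.2
    have hjp : ((j : ℕ) : ℤ) < (p : ℤ) := by exact_mod_cast j.2
    have hiz : (0 : ℤ) ≤ ((i : ℕ) : ℤ) := Int.natCast_nonneg _
    have hjz : (0 : ℤ) ≤ ((j : ℕ) : ℤ) := Int.natCast_nonneg _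
    have h0 : ((j : ℕ) : ℤ) - ((i : ℕ) : ℤ) = 0 :=
      Int.eq_zero_of_abs_lt_dvd hdvd (by rw [abs_sub_lt_iff]; omega)
    have : (i : ℕ) = (j : ℕ) := by omega
    exact hij (Fin.ext this)
  have hind : LinearIndependent Kp (fun i : Fin p => t ^ (i : ℕ)) := by
    rw [Fintype.linearIndependent_iff]
    intro g hg
    by_contra hne
    push_neg at hne
    obtain ⟨j, hj⟩ := hne
    have hb : ∀ i : Fin p, ∃ bi : K, bi ^ p = (g i : K) := by
      intro i
      obtain ⟨bi, hbi⟩ := (g i).2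
      exact ⟨bi, (frobenius_def p bi).symm.trans hbi⟩
    choose b hbp using hb
    have hsum : (∑ i, b i ^ p * t ^ (i : ℕ)) = 0 := by
      rw [← hg]
      exact Finset.sum_congr rfl fun i _ => by rw [hsmuldef, hbp]
    have hval := hvsum_eq Finset.univ (fun i => b i ^ p * t ^ (i : ℕ)) (hgdist b)
    rw [hsum, hv0] at hval
    have hbj : b j ≠ 0 := by
      intro h
      apply hj
      have hz : (g j : K) = 0 := by rw [← hbp j, h]; simp [zero_pow hp.ne_zero]
      exact Subtype.ext hz
    have hgj : b j ^ p * t ^ (j : ℕ) ≠ 0 :=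
      mul_ne_zero (pow_ne_zero _ hbj) (pow_ne_zero _ htne)
    have hle := Finset.inf_le (f := fun i => v (b i ^ p * t ^ (i : ℕ))) (Finset.mem_univ j)
    rw [← hval] at hle
    exact hgj ((hv_top _).1 (top_le_iff.1 hle))
  have hcard : Fintype.card (Fin p) = Module.finrank Kp K := by
    have h1 : Module.finrank Kp K ≤ p := by simpa using finrank_le_of_span_eq_top hspan
    have h2 : p ≤ Module.finrank Kp K := by simpa using hind.fintype_card_le_finrank
    rw [Fintype.card_fin]; omega
  have hspan_t : Submodule.span Kp (Set.range fun i : Fin p => t ^ (i : ℕ)) = ⊤ :=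
    hind.span_eq_top_of_card_eq_finrank hcard
  have hrep : ∀ a : K, ∃ b : Fin p → K, a = ∑ i, b i ^ p * t ^ (i : ℕ) := by
    intro a
    have ha : a ∈ Submodule.span Kp (Set.range fun i : Fin p => t ^ (i : ℕ)) := by
      rw [hspan_t]; trivial
    rw [Submodule.mem_span_range_iff_exists_fun] at ha
    obtain ⟨c, hc⟩ := ha
    have hb : ∀ i : Fin p, ∃ bi : K, bi ^ p = (c i : K) := by
      intro i
      obtain ⟨bi, hbi⟩ := (c i).2
      exact ⟨bi, (frobenius_def p bi).symm.trans hbi⟩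
    choose b hbp using hb
    exact ⟨b, by
      rw [← hc]
      exact (Finset.sum_congr rfl fun i _ => by rw [hsmuldef, hbp]).symm⟩
  -- the key lemma : v a ≤ v (D a) + 1
  have hkey : ∀ a : K, v a ≤ v (D a) + 1 := by
    intro a
    obtain ⟨b, rfl⟩ := hrep a
    set g : Fin p → K := fun i => b i ^ p * t ^ (i : ℕ) with hgdef
    by_cases h0 : (∑ i, g i) = 0
    · rw [h0, hD0, hv0]
      exact le_top
    · obtain ⟨M, hM⟩ := hvtop' _ h0
      have hvalsum := hvsum_eq Finset.univ g (hgdist b)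
      have hDbound : ∀ i : Fin p, ((M - 1 : ℤ) : WithTop ℤ) ≤ v (D (g i)) := by
        intro i
        by_cases hbi : b i = 0
        · have hz : g i = 0 := by rw [hgdef]; simp [hbi, zero_pow hp.ne_zero]
          rw [hz, hD0, hv0]
          exact le_top
        · have hMle : ((M : ℤ) : WithTop ℤ) ≤ v (g i) := by
            calc ((M : ℤ) : WithTop ℤ) = v (∑ i, g i) := hM.symm
            _ = Finset.univ.inf fun i => v (g i) := hvalsum
            _ ≤ v (g i) := Finset.inf_le (Finset.mem_univ i)
          obtain ⟨m, hm, hvgi⟩ := hvterm (b i) i hbi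
          rcases Nat.eq_zero_or_pos (i : ℕ) with hi0 | hipos
          · have hz : D (g i) = 0 := by
              have : g i = b i ^ p := by rw [hgdef]; simp [hi0]
              rw [this]; exact hDp (b i)
            rw [hz, hv0]
            exact le_top
          · obtain ⟨k, hk⟩ : ∃ k, (i : ℕ) = k + 1 := ⟨(i : ℕ) - 1, by omega⟩
            have hDg : D (g i) = b i ^ p * (((k + 1 : ℕ) : K) * t ^ k * D t) := by
              have h1 : g i = b i ^ p * t ^ (i : ℕ) := rfl
              rw [h1, hleib, hk, hDpow, hDp]
              ring
            have hknat : (0 : ℕ) < k + 1 := Nat.succ_pos k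
            have hkp : k + 1 < p := by have := i.2; omega
            have hvDg : v (D (g i)) = (((p : ℤ) * m + (k : ℤ) : ℤ) : WithTop ℤ) := by
              rw [hDg, hv_mul, hv_mul, hv_mul, hvpow (b i) p, hm, hsmulcoe,
                hvnat (k + 1) hknat hkp, hvt, htD]
              rw [zero_add, add_zero, ← WithTop.coe_add]
            have hle2 : (M : ℤ) ≤ (p : ℤ) * m + ((k : ℤ) + 1) := by
              have hik : (((i : ℕ) : ℤ)) = (k : ℤ) + 1 := by exact_mod_cast hk
              rw [hvgi, hik] at hMle
              exact_mod_cast hMle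
            rw [hvDg]
            have h3 : (M : ℤ) - 1 ≤ (p : ℤ) * m + (k : ℤ) := by linarith
            exact_mod_cast h3
      have hfinal : ((M - 1 : ℤ) : WithTop ℤ) ≤ v (D (∑ i, g i)) := by
        rw [hDsum Finset.univ g]
        exact hvsum_ge Finset.univ (fun i => D (g i)) _ (fun i _ => hDbound i)
      rw [hM]
      rcases eq_or_ne (v (D (∑ i, g i))) ⊤ with htop | hntop
      · rw [htop, top_add]
        exact le_top
      · obtain ⟨N, hN⟩ := WithTop.ne_top_iff_exists.1 hntop
        rw [← hN] at hfinal ⊢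
        have h4 : M - 1 ≤ N := by exact_mod_cast hfinal
        have h5 : M ≤ N + 1 := by omega
        exact_mod_cast h5
  -- iterate
  have hkeyit : ∀ (k : ℕ) (a : K), v a ≤ v (D^[k] a) + ((k : ℤ) : WithTop ℤ) := by
    intro k
    induction k with
    | zero => intro a; simp
    | succ n ih =>
      intro a
      rw [Function.iterate_succ_apply']
      have hcast : (((n : ℤ) : WithTop ℤ) + 1) = (((n + 1 : ℕ) : ℤ) : WithTop ℤ) := by
        norm_cast
      calc v a ≤ v (D^[n] a) + ((n : ℤ) : WithTop ℤ) := ih a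
      _ ≤ (v (D (D^[n] a)) + 1) + ((n : ℤ) : WithTop ℤ) :=
        add_le_add (hkey (D^[n] a)) le_rfl
      _ = v (D (D^[n] a)) + (((n : ℤ) : WithTop ℤ) + 1) := by rw [add_assoc, add_comm 1]
      _ = v (D (D^[n] a)) + (((n + 1 : ℕ) : ℤ) : WithTop ℤ) := by rw [hcast]
  -- conclusion
  by_contra hcon
  push_neg at hcon
  have hf0 : f ≠ 0 := by
    intro h
    rw [h, hv0] at hcon
    exact absurd hcon (by simp)
  obtain ⟨m, hm⟩ := hvtop' f hf0
  have hm2 : m ≤ -2 := by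
    rw [hm] at hcon
    have hneg1 : (-1 : WithTop ℤ) = ((-1 : ℤ) : WithTop ℤ) := by norm_cast
    rw [hneg1] at hcon
    have h1 : m < -1 := by exact_mod_cast hcon
    omega
  have hpz : (2 : ℤ) ≤ (p : ℤ) := by exact_mod_cast hp2
  have hvfp : v (f ^ p) = (((p : ℤ) * m : ℤ) : WithTop ℤ) := by rw [hvpow, hm, hsmulcoe]
  have hD1f : D^[p - 1] f = -(f ^ p) + y := by rw [← hric]; ring
  have hpm_neg : ((p : ℤ) * m : ℤ) < 0 := by nlinarith
  have hvDf : v (D^[p - 1] f) = (((p : ℤ) * m : ℤ) : WithTop ℤ) := by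
    rw [hD1f, hvmin_lt (-(f ^ p)) y ?_, hvneg, hvfp]
    rw [hvneg, hvfp]
    refine lt_of_lt_of_le ?_ hy
    exact_mod_cast hpm_neg
  have hit := hkeyit (p - 1) f
  rw [hm, hvDf] at hit
  have hit' : m ≤ (p : ℤ) * m + ((p - 1 : ℕ) : ℤ) := by exact_mod_cast hit
  have hples : ((p - 1 : ℕ) : ℤ) = (p : ℤ) - 1 := by
    rw [Nat.cast_sub (by omega : 1 ≤ p)]
    simp
  rw [hples] at hit'
  have h1 : (1 : ℤ) ≤ (p : ℤ) - 1 := by omega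
  have h2 : (1 : ℤ) ≤ -(m + 1) := by omega
  nlinarith [mul_le_mul h1 h2 (by omega : (0:ℤ) ≤ 1) (by omega : (0:ℤ) ≤ (p:ℤ) - 1)]
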